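/- For all positive integers d, δ and every integer g ≥ 1 one has Σ_{ω ∣ gcd(d,δ)} J₂(ω) · σ_{2g−1}(d/ω) = Σ_{l ∣ d} (d/l)^{2g−1} · gcd(l,δ)², where both sums range over positive divisors, σ_m(k) = Σ_{j ∣ k} j^m is the m-th power sum-of-divisors function, and J₂(m) denotes the number of elements of additive order exactly m in (ℤ/mℤ)². -/

import Mathlib

noncomputable def J2 (m : ℕ) : ℕ := Nat.card {x : ZMod m × ZMod m // addOrderOf x = m}

def sigmaFn (m k : ℕ) : ℕ := ∑ j ∈ k.divisors, j ^ m

section aux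

variable {k ω : ℕ}

/-- The injection `ZMod ω →+ ZMod k` given by multiplication by `k/ω`, for `ω ∣ k`. -/
noncomputable def emb (k ω : ℕ) (hω : ω ∣ k) : ZMod ω →+ ZMod k :=
  ZMod.lift ω ⟨zmultiplesHom (ZMod k) ((k / ω : ℕ) : ZMod k), by
    have h : ((ω : ℤ)) • (((k / ω : ℕ) : ZMod k)) = ((ω * (k/ω) : ℕ) : ZMod k) := by
      rw [zsmul_eq_mul]; push_cast; ring
    simp only [zmultiplesHom_apply, h, Nat.mul_div_cancel' hω, ZMod.natCast_self]⟩

lemma emb_natCast (hω : ω ∣ k) (n : ℕ) :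
    emb k ω hω ((n : ℕ) : ZMod ω) = ((n * (k / ω) : ℕ) : ZMod k) := by
  have h : ((n : ℕ) : ZMod ω) = ((n : ℤ) : ZMod ω) := by push_cast; ring
  rw [emb, h, ZMod.lift_coe]
  simp only [zmultiplesHom_apply, zsmul_eq_mul]
  push_cast; ring

lemma emb_injective (hk : 0 < k) (hω0 : 0 < ω) (hω : ω ∣ k) :
    Function.Injective (emb k ω hω) := by
  haveI : NeZero ω := ⟨hω0.ne'⟩
  rw [injective_iff_map_eq_zero]
  intro x hx
  have hxv : ((x.val : ℕ) : ZMod ω) = x := ZMod.natCast_zmod_val x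
  rw [← hxv, emb_natCast] at hx
  rw [ZMod.natCast_eq_zero_iff] at hx
  have hc : 0 < k / ω := Nat.div_pos (Nat.le_of_dvd hk hω) hω0
  have h2 : ω * (k / ω) ∣ x.val * (k / ω) := by rwa [Nat.mul_div_cancel' hω]
  have hdvd : ω ∣ x.val := (mul_dvd_mul_iff_right hc.ne').mp h2
  have hx0 : x.val = 0 := Nat.eq_zero_of_dvd_of_lt hdvd (ZMod.val_lt x)
  rw [← hxv, hx0, Nat.cast_zero]

lemma emb_surj_on (hk : 0 < k) (hω0 : 0 < ω) (hω : ω ∣ k) (y : ZMod k)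
    (hy : ω • y = 0) : ∃ x : ZMod ω, emb k ω hω x = y := by
  haveI : NeZero k := ⟨hk.ne'⟩
  have hyv : ((y.val : ℕ) : ZMod k) = y := ZMod.natCast_zmod_val y
  have h1 : ((ω * y.val : ℕ) : ZMod k) = 0 := by
    push_cast
    rw [hyv, ← nsmul_eq_mul]
    exact hy
  rw [ZMod.natCast_eq_zero_iff] at h1
  have hc : (k / ω) ∣ y.val := by
    have h2 : ω * (k / ω) ∣ ω * y.val := by rwa [Nat.mul_div_cancel' hω]
    exact (mul_dvd_mul_iff_left hω0.ne').mp h2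
  refine ⟨((y.val / (k / ω) : ℕ) : ZMod ω), ?_⟩
  rw [emb_natCast, Nat.div_mul_cancel hc, hyv]

lemma card_addOrderOf_eq (hk : 0 < k) (hω : ω ∣ k) (hω0 : 0 < ω) :
    Nat.card {x : ZMod k × ZMod k // addOrderOf x = ω} = J2 ω := by
  set g := emb k ω hω with hg
  have hginj : Function.Injective g := emb_injective hk hω0 hω
  set G2 : ZMod ω × ZMod ω →+ ZMod k × ZMod k := AddMonoidHom.prodMap g g with hG2
  have hG2inj : Function.Injective G2 := Function.Injective.prodMap hginj hginj
  have horder : ∀ x : ZMod ω × ZMod ω, addOrderOf (G2 x) = addOrderOf x :=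
    fun x => addOrderOf_injective G2 hG2inj x
  refine (Nat.card_eq_of_bijective
    (fun x : {x : ZMod ω × ZMod ω // addOrderOf x = ω} =>
      (⟨G2 x.1, by rw [horder, x.2]⟩ : {x : ZMod k × ZMod k // addOrderOf x = ω}))
    ⟨?_, ?_⟩).symm
  · intro a b hab
    apply Subtype.ext
    apply hG2inj
    simpa using hab
  · rintro ⟨y, hy⟩
    have hsm : ω • y = 0 := by
      rw [← hy]; exact addOrderOf_nsmul_eq_zero y
    have h1 : ω • y.1 = 0 := congrArg Prod.fst hsm
    have h2 : ω • y.2 = 0 := congrArg Prod.snd hsm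
    obtain ⟨a, ha⟩ := emb_surj_on hk hω0 hω y.1 h1
    obtain ⟨b, hb⟩ := emb_surj_on hk hω0 hω y.2 h2
    have hGab : G2 (a, b) = y := by
      apply Prod.ext <;> simp [hG2, hg, ha, hb]
    exact ⟨⟨(a, b), by rw [← horder, hGab, hy]⟩, Subtype.ext hGab⟩

lemma sum_J2 (k : ℕ) (hk : 0 < k) : ∑ ω ∈ k.divisors, J2 ω = k ^ 2 := by
  haveI : NeZero k := ⟨hk.ne'⟩
  classical
  have hcard : Fintype.card (ZMod k × ZMod k) = k ^ 2 := by
    simp [Fintype.card_prod, ZMod.card, sq]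
  have hmem : ∀ x : ZMod k × ZMod k, x ∈ Finset.univ → addOrderOf x ∈ k.divisors := by
    intro x _
    rw [Nat.mem_divisors]
    refine ⟨addOrderOf_dvd_iff_nsmul_eq_zero.mpr ?_, hk.ne'⟩
    apply Prod.ext <;> simp [nsmul_eq_mul, ZMod.natCast_self]
  have hfib := Finset.card_eq_sum_card_fiberwise hmem
  rw [Finset.card_univ, hcard] at hfib
  rw [hfib]
  refine Finset.sum_congr rfl fun ω hω => ?_
  rw [Nat.mem_divisors] at hω
  rw [← card_addOrderOf_eq hk hω.1 (Nat.pos_of_dvd_of_pos hω.1 hk),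
    Nat.card_eq_fintype_card, Fintype.card_subtype]

end aux

/-- `Σ_{ω ∣ gcd(d,δ)} J₂(ω)·σ_{2g−1}(d/ω) = Σ_{l ∣ d} (d/l)^{2g−1}·gcd(l,δ)²`
for every `g ≥ 1`. -/
theorem sum_J2_sigma_pow_eq_sum_gcd_sq (d δ g : ℕ) (hd : 0 < d) (hδ : 0 < δ)
    (hg : 1 ≤ g) :
    ∑ ω ∈ (Nat.gcd d δ).divisors, J2 ω * sigmaFn (2 * g - 1) (d / ω)
      = ∑ l ∈ d.divisors, (d / l) ^ (2 * g - 1) * Nat.gcd l δ ^ 2 := by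
  classical
  set m := 2 * g - 1 with hm
  have hgcd_div : ∀ l : ℕ, 0 < l → (Nat.gcd l δ).divisors
      = δ.divisors.filter (fun ω => ω ∣ l) := by
    intro l hl
    ext ω
    simp only [Nat.mem_divisors, Finset.mem_filter, Nat.dvd_gcd_iff]
    constructor
    · rintro ⟨⟨h1, h2⟩, -⟩; exact ⟨⟨h2, hδ.ne'⟩, h1⟩
    · rintro ⟨⟨h2, -⟩, h1⟩
      exact ⟨⟨h1, h2⟩, Nat.gcd_ne_zero_left hl.ne'⟩
  have key : ∀ ω : ℕ, ω ∣ d → 0 < ω →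
      ∑ l ∈ d.divisors.filter (fun l => ω ∣ l), (d / l) ^ m = sigmaFn m (d / ω) := by
    intro ω hωd hω0
    rw [sigmaFn, ← Nat.sum_div_divisors (d / ω) (fun t => t ^ m)]
    refine Finset.sum_nbij' (fun l => l / ω) (fun t => ω * t) ?_ ?_ ?_ ?_ ?_
    · intro l hl
      simp only [Finset.mem_filter, Nat.mem_divisors] at hl
      obtain ⟨⟨hld, -⟩, hωl⟩ := hl
      obtain ⟨t, rfl⟩ := hωl
      obtain ⟨s, hs⟩ := hld
      simp only [Nat.mul_div_cancel_left t hω0, Nat.mem_divisors]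
      have hdω : d / ω = t * s := by rw [hs, mul_assoc, Nat.mul_div_cancel_left _ hω0]
      refine ⟨?_, (Nat.div_pos (Nat.le_of_dvd hd hωd) hω0).ne'⟩
      rw [hdω]; exact dvd_mul_right t s
    · intro t ht
      rw [Nat.mem_divisors] at ht
      simp only [Finset.mem_filter, Nat.mem_divisors]
      exact ⟨⟨Nat.mul_dvd_of_dvd_div hωd ht.1, hd.ne'⟩, dvd_mul_right ω t⟩
    · intro l hl
      simp only [Finset.mem_filter] at hl
      exact Nat.mul_div_cancel' hl.2
    · intro t ht
      exact Nat.mul_div_cancel_left t hω0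
    · intro l hl
      simp only [Finset.mem_filter, Nat.mem_divisors] at hl
      obtain ⟨⟨hld, -⟩, ⟨t, rfl⟩⟩ := hl
      simp only [Nat.mul_div_cancel_left t hω0, Nat.div_div_eq_div_mul]
  have hR : ∀ l ∈ d.divisors, (d / l) ^ m * Nat.gcd l δ ^ 2
      = ∑ ω ∈ δ.divisors, if ω ∣ l then (d / l) ^ m * J2 ω else 0 := by
    intro l hl
    rw [Nat.mem_divisors] at hl
    have hlpos : 0 < l := Nat.pos_of_dvd_of_pos hl.1 hd
    rw [← Finset.sum_filter, ← hgcd_div l hlpos, ← Finset.mul_sum,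
      sum_J2 _ (Nat.gcd_pos_of_pos_left δ hlpos)]
  rw [Finset.sum_congr rfl hR, Finset.sum_comm, hgcd_div d hd]
  rw [Finset.sum_filter]
  refine Finset.sum_congr rfl fun ω hω => ?_
  rw [Nat.mem_divisors] at hω
  by_cases hωd : ω ∣ d
  · simp only [hωd, if_true]
    have hω0 : 0 < ω := Nat.pos_of_dvd_of_pos (hω.1.trans dvd_rfl) hδ
    rw [← key ω hωd hω0, Finset.sum_filter, Finset.mul_sum]
    refine Finset.sum_congr rfl fun l hl => ?_
    rw [mul_ite, mul_zero, mul_comm]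
  · simp only [hωd, if_false]
    refine (Finset.sum_eq_zero fun l hl => ?_).symm
    rw [Nat.mem_divisors] at hl
    rw [if_neg]
    intro hωl
    exact hωd (hωl.trans hl.1)
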